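/- arXiv:2510.04091 — 2 statements merged into one kernel-verified Lean document; each statement's English description precedes it below -/
import Mathlib

section
/- Let X be a discrete random variable (instance), and let S (candidate flag) and Y (true label flag) be {0,1}-valued random variables with joint distribution satisfying: P(S=0 | X=x, Y=1) = 0 for all x, and P(S=0 | X=x, Y=0) = p for a constant p > 0 independent of x, and suppose P(S=0) > 0. Then for every x, P(X=x | S=0) = P(X=x | Y=0). -/
open Finset

/-- Probability of an event under a weight function on a finite sample space. -/
noncomputable def Pr {Ω : Type*} [Fintype Ω] (w : Ω → ℝ) (A : Set Ω) : ℝ :=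
  ∑ ω, A.indicator w ω

/-- Conditional probability `P(A | B)` under a weight function. -/
noncomputable def condPr {Ω : Type*} [Fintype Ω] (w : Ω → ℝ) (A B : Set Ω) : ℝ :=
  Pr w (A ∩ B) / Pr w B

lemma Pr_nonneg {Ω : Type*} [Fintype Ω] (w : Ω → ℝ) (hw : ∀ ω, 0 ≤ w ω) (A : Set Ω) :
    0 ≤ Pr w A := by
  apply Finset.sum_nonneg
  intro ω _
  exact Set.indicator_nonneg (fun ω _ => hw ω) ω

lemma Pr_mono {Ω : Type*} [Fintype Ω] (w : Ω → ℝ) (hw : ∀ ω, 0 ≤ w ω) {A B : Set Ω}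
    (h : A ⊆ B) : Pr w A ≤ Pr w B := by
  apply Finset.sum_le_sum
  intro ω _
  classical
  by_cases hA : ω ∈ A
  · rw [Set.indicator_of_mem hA, Set.indicator_of_mem (h hA)]
  · rw [Set.indicator_of_notMem hA]
    exact Set.indicator_nonneg (fun ω _ => hw ω) ω

lemma Pr_splitY {Ω : Type*} [Fintype Ω] (w : Ω → ℝ) (Y : Ω → Fin 2) (A : Set Ω) :
    Pr w A = Pr w (A ∩ {ω | Y ω = 0}) + Pr w (A ∩ {ω | Y ω = 1}) := by
  classical
  unfold Pr
  rw [← Finset.sum_add_distrib]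
  apply Finset.sum_congr rfl
  intro ω _
  simp only [Set.indicator_apply, Set.mem_inter_iff, Set.mem_setOf_eq]
  by_cases hA : ω ∈ A
  · have hY : Y ω = 0 ∨ Y ω = 1 := by omega
    rcases hY with h | h <;> simp [hA, h]
  · simp [hA]

lemma Pr_splitX {Ω α : Type*} [Fintype Ω] [Fintype α] (w : Ω → ℝ) (X : Ω → α) (A : Set Ω) :
    Pr w A = ∑ x, Pr w (A ∩ {ω | X ω = x}) := by
  classical
  unfold Pr
  rw [Finset.sum_comm]
  apply Finset.sum_congr rfl
  intro ω _
  by_cases hA : ω ∈ A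
  · rw [Set.indicator_of_mem hA]
    rw [Finset.sum_eq_single (X ω)]
    · exact (Set.indicator_of_mem (show ω ∈ A ∩ {ω' | X ω' = X ω} from ⟨hA, rfl⟩) w).symm
    · intro x _ hx
      exact Set.indicator_of_notMem (fun h => hx (h.2.symm)) w
    · intro h; exact absurd (Finset.mem_univ _) h
  · rw [Set.indicator_of_notMem hA]
    rw [Finset.sum_eq_zero]
    intro x _
    exact Set.indicator_of_notMem (fun h => hA h.1) w

/-- Data-generation lemma for PML: if a relevant label (`Y = 1`) is never a non-candidate
(`S = 0`), and an irrelevant label is a non-candidate with constant probability `p > 0`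
independent of the instance `X = x`, then conditioning on `S = 0` gives the same
instance distribution as conditioning on `Y = 0`. -/
theorem stmt0 {Ω α : Type*} [Fintype Ω] [Fintype α]
    (w : Ω → ℝ) (hw : ∀ ω, 0 ≤ w ω) (hw1 : ∑ ω, w ω = 1)
    (X : Ω → α) (S Y : Ω → Fin 2) (p : ℝ) (hp : 0 < p)
    (hSY1 : ∀ x : α, condPr w {ω | S ω = 0} ({ω | X ω = x} ∩ {ω | Y ω = 1}) = 0)
    (hSY0 : ∀ x : α, condPr w {ω | S ω = 0} ({ω | X ω = x} ∩ {ω | Y ω = 0}) = p)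
    (hS : 0 < Pr w {ω | S ω = 0})
    (hY : 0 < Pr w {ω | Y ω = 0}) :
    ∀ x : α, condPr w {ω | X ω = x} {ω | S ω = 0} = condPr w {ω | X ω = x} {ω | Y ω = 0} := by
  classical
  intro x
  have key1 : ∀ x : α, Pr w ({ω | S ω = 0} ∩ ({ω | X ω = x} ∩ {ω | Y ω = 1})) = 0 := by
    intro x
    have h := hSY1 x
    unfold condPr at h
    rcases div_eq_zero_iff.mp h with h0 | h0
    · exact h0
    · have hle := Pr_mono w hw (Set.inter_subset_right :
        {ω | S ω = 0} ∩ ({ω | X ω = x} ∩ {ω | Y ω = 1}) ⊆ ({ω | X ω = x} ∩ {ω | Y ω = 1}))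
      have := Pr_nonneg w hw ({ω | S ω = 0} ∩ ({ω | X ω = x} ∩ {ω | Y ω = 1}))
      linarith [hle, h0.le, h0.ge]
  have key0 : ∀ x : α, Pr w ({ω | S ω = 0} ∩ ({ω | X ω = x} ∩ {ω | Y ω = 0}))
      = p * Pr w ({ω | X ω = x} ∩ {ω | Y ω = 0}) := by
    intro x
    have h := hSY0 x
    unfold condPr at h
    by_cases hden : Pr w ({ω | X ω = x} ∩ {ω | Y ω = 0}) = 0
    · have hle := Pr_mono w hw (Set.inter_subset_right :
        {ω | S ω = 0} ∩ ({ω | X ω = x} ∩ {ω | Y ω = 0}) ⊆ ({ω | X ω = x} ∩ {ω | Y ω = 0}))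
      have hnn := Pr_nonneg w hw ({ω | S ω = 0} ∩ ({ω | X ω = x} ∩ {ω | Y ω = 0}))
      rw [hden]
      rw [hden] at hle
      linarith
    · field_simp at h
      linarith [h]
  have keyX : ∀ x : α, Pr w ({ω | S ω = 0} ∩ {ω | X ω = x})
      = p * Pr w ({ω | X ω = x} ∩ {ω | Y ω = 0}) := by
    intro x
    have hsplit := Pr_splitY w Y ({ω | S ω = 0} ∩ {ω | X ω = x})
    rw [Set.inter_assoc, Set.inter_assoc] at hsplit
    rw [hsplit, key0 x, key1 x]
    ring
  have hStot : Pr w {ω | S ω = 0} = p * Pr w {ω | Y ω = 0} := by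
    rw [Pr_splitX w X {ω | S ω = 0}, Pr_splitX w X {ω | Y ω = 0}, Finset.mul_sum]
    apply Finset.sum_congr rfl
    intro x _
    rw [keyX x, Set.inter_comm]
  unfold condPr
  rw [Set.inter_comm {ω | X ω = x} {ω | S ω = 0}, keyX x, hStot,
    mul_div_mul_left _ _ (ne_of_gt hp)]
end

section
/- Let X be a discrete random variable, q ≥ 1, Y = (Y_1,…,Y_q) a {0,1}^q-valued random vector with π_j = P(Y_j = 1) < 1 for each j, and ℓ a binary loss. Define the ℓ-risk w.r.t. Hamming loss of g = (g_1,…,g_q) as R(g) = E[(1/q) Σ_{j=1}^q ℓ(g_j(X), Y_j)]. Then R(g) = E[(1/q) Σ_j ℓ(g_j(X), 1)] + Σ_j ((1-π_j)/q) · E[ℓ(g_j(X),0) - ℓ(g_j(X),1) | Y_j = 0]. -/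
open Finset

/-- Expectation of a real random variable under a weight function. -/
noncomputable def Ex {Ω : Type*} [Fintype Ω] (w : Ω → ℝ) (f : Ω → ℝ) : ℝ :=
  ∑ ω, w ω * f ω

/-- Conditional expectation `E[f | B]` under a weight function. -/
noncomputable def condEx {Ω : Type*} [Fintype Ω] (w : Ω → ℝ) (f : Ω → ℝ) (B : Set Ω) : ℝ :=
  (∑ ω, B.indicator (fun ω => w ω * f ω) ω) / Pr w B

/-- Multi-label rewriting of the ℓ-risk w.r.t. the Hamming loss:
`R(g) = E[(1/q)Σ_j ℓ(g_j(X),1)] + Σ_j ((1-π_j)/q)·E[ℓ(g_j(X),0)-ℓ(g_j(X),1) | Y_j = 0]`. -/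
theorem stmt2 {Ω α : Type*} [Fintype Ω] (q : ℕ) (hq : 1 ≤ q)
    (w : Ω → ℝ) (hw : ∀ ω, 0 ≤ w ω) (hw1 : ∑ ω, w ω = 1)
    (X : Ω → α) (Y : Ω → Fin q → Fin 2) (ℓ : ℝ → Fin 2 → ℝ) (g : Fin q → α → ℝ)
    (hπ : ∀ j : Fin q, Pr w {ω | Y ω j = 1} < 1) :
    Ex w (fun ω => (q : ℝ)⁻¹ * ∑ j, ℓ (g j (X ω)) (Y ω j))
      = Ex w (fun ω => (q : ℝ)⁻¹ * ∑ j, ℓ (g j (X ω)) 1)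
        + ∑ j, ((1 - Pr w {ω | Y ω j = 1}) / q)
            * condEx w (fun ω => ℓ (g j (X ω)) 0 - ℓ (g j (X ω)) 1) {ω | Y ω j = 0} := by
  have hqr : (q : ℝ) ≠ 0 := by positivity
  have hPr : ∀ j : Fin q, Pr w {ω | Y ω j = 0} = 1 - Pr w {ω | Y ω j = 1} := by
    intro j
    have hsum : Pr w {ω | Y ω j = 0} + Pr w {ω | Y ω j = 1} = 1 := by
      rw [← hw1]
      unfold Pr
      rw [← Finset.sum_add_distrib]
      apply Finset.sum_congr rfl
      intro ω _
      have h2 : Y ω j = 0 ∨ Y ω j = 1 := by omega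
      rcases h2 with h | h <;> simp [Set.indicator, h]
    linarith
  have hterm : ∀ j : Fin q,
      ((1 - Pr w {ω | Y ω j = 1}) / q)
        * condEx w (fun ω => ℓ (g j (X ω)) 0 - ℓ (g j (X ω)) 1) {ω | Y ω j = 0}
      = (q : ℝ)⁻¹ * ∑ ω, ({ω' | Y ω' j = 0}).indicator
          (fun ω' => w ω' * (ℓ (g j (X ω')) 0 - ℓ (g j (X ω')) 1)) ω := by
    intro j
    have h0 : (1 : ℝ) - Pr w {ω | Y ω j = 1} ≠ 0 := by linarith [hπ j]
    unfold condEx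
    rw [hPr j]
    field_simp
  have hpt : ∀ ω : Ω,
      w ω * ((q : ℝ)⁻¹ * ∑ j, ℓ (g j (X ω)) (Y ω j))
      = w ω * ((q : ℝ)⁻¹ * ∑ j, ℓ (g j (X ω)) 1)
        + (q : ℝ)⁻¹ * ∑ j, ({ω' | Y ω' j = 0}).indicator
            (fun ω' => w ω' * (ℓ (g j (X ω')) 0 - ℓ (g j (X ω')) 1)) ω := by
    intro ω
    have hind : ∀ j : Fin q, ({ω' | Y ω' j = 0}).indicator
        (fun ω' => w ω' * (ℓ (g j (X ω')) 0 - ℓ (g j (X ω')) 1)) ω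
        = w ω * (ℓ (g j (X ω)) (Y ω j) - ℓ (g j (X ω)) 1) := by
      intro j
      have h2 : Y ω j = 0 ∨ Y ω j = 1 := by omega
      rcases h2 with h | h <;> simp [Set.indicator, h]
    rw [Finset.sum_congr rfl (fun j _ => hind j)]
    simp only [Finset.mul_sum]
    rw [← Finset.sum_add_distrib]
    apply Finset.sum_congr rfl
    intro j _
    ring
  rw [Finset.sum_congr rfl (fun j _ => hterm j)]
  unfold Ex
  rw [Finset.sum_congr rfl (fun ω _ => hpt ω), Finset.sum_add_distrib]
  congr 1
  rw [← Finset.mul_sum, ← Finset.mul_sum, Finset.sum_comm]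
end
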